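/- Let W be a real symmetric positive definite n×n matrix, T a real symmetric invertible n×n matrix, and α > 0. Then the spectral radius of G(α) = i·T⁻¹W(αI + W)⁻¹(αI − iT) is at most (λ_max/(α+λ_max))·(√(α²+μ_min²)/μ_min), where λ_max is the largest eigenvalue of W and μ_min is the smallest absolute value of an eigenvalue of T. -/

import Mathlib

open Matrix

section Helpers

lemma diag_norm_le {n : ℕ} (b : OrthonormalBasis (Fin n) ℂ (EuclideanSpace ℂ (Fin n)))
    (f g : EuclideanSpace ℂ (Fin n) →ₗ[ℂ] EuclideanSpace ℂ (Fin n)) (c d : Fin n → ℂ)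
    (hf : ∀ i, f (b i) = c i • b i) (hg : ∀ i, g (b i) = d i • b i)
    (C : ℝ) (hC : 0 ≤ C) (h : ∀ i, ‖c i‖ ≤ C * ‖d i‖)
    (x : EuclideanSpace ℂ (Fin n)) : ‖f x‖ ≤ C * ‖g x‖ := by
  have repr_eq : ∀ (f : EuclideanSpace ℂ (Fin n) →ₗ[ℂ] EuclideanSpace ℂ (Fin n))
      (c : Fin n → ℂ), (∀ i, f (b i) = c i • b i) →
      ∀ i, b.repr (f x) i = c i * b.repr x i := by
    intro f c hf i
    conv_lhs => rw [← b.sum_repr x]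
    rw [map_sum, map_sum]
    simp only [_root_.map_smul, hf, b.repr_self]
    rw [WithLp.ofLp_sum, Finset.sum_apply]
    simp [EuclideanSpace.single_apply, smul_smul, Finset.sum_ite_eq', mul_comm]
  have normsq : ∀ (y : EuclideanSpace ℂ (Fin n)), ‖y‖ ^ 2 = ∑ i, ‖b.repr y i‖ ^ 2 := by
    intro y
    rw [← b.repr.norm_map y, EuclideanSpace.norm_eq]
    rw [Real.sq_sqrt (by positivity)]
  have key : ‖f x‖ ^ 2 ≤ (C * ‖g x‖) ^ 2 := by
    rw [normsq (f x), mul_pow, normsq (g x), Finset.mul_sum]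
    apply Finset.sum_le_sum
    intro i _
    rw [repr_eq f c hf i, repr_eq g d hg i, norm_mul, norm_mul]
    calc (‖c i‖ * ‖b.repr x i‖) ^ 2 = ‖c i‖ ^ 2 * ‖b.repr x i‖ ^ 2 := by ring
      _ ≤ (C * ‖d i‖) ^ 2 * ‖b.repr x i‖ ^ 2 := by
          exact mul_le_mul_of_nonneg_right (pow_le_pow_left₀ (norm_nonneg _) (h i) 2)
            (sq_nonneg _)
      _ = C ^ 2 * (‖d i‖ * ‖b.repr x i‖) ^ 2 := by ring
  nlinarith [norm_nonneg (f x), norm_nonneg (g x), mul_nonneg hC (norm_nonneg (g x))]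

lemma matrix_diag_norm_le {n : ℕ} (b : OrthonormalBasis (Fin n) ℂ (EuclideanSpace ℂ (Fin n)))
    (M N : Matrix (Fin n) (Fin n) ℂ) (c d : Fin n → ℂ)
    (hM : ∀ i, M *ᵥ ⇑(b i) = c i • ⇑(b i)) (hN : ∀ i, N *ᵥ ⇑(b i) = d i • ⇑(b i))
    (C : ℝ) (hC : 0 ≤ C) (h : ∀ i, ‖c i‖ ≤ C * ‖d i‖)
    (x : EuclideanSpace ℂ (Fin n)) :
    ‖toEuclideanLin M x‖ ≤ C * ‖toEuclideanLin N x‖ := by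
  refine diag_norm_le b _ _ c d (fun i => ?_) (fun i => ?_) C hC h x
  · exact congrArg (WithLp.toLp 2) (hM i)
  · exact congrArg (WithLp.toLp 2) (hN i)

lemma spectrum_pos_of_posDef {n : ℕ} {W : Matrix (Fin n) (Fin n) ℝ} (hW : W.PosDef) :
    ∀ r ∈ spectrum ℝ W, 0 < r := by
  intro r hr
  rw [spectrum.mem_iff] at hr
  have hdet : (algebraMap ℝ (Matrix (Fin n) (Fin n) ℝ) r - W).det = 0 := by
    by_contra hd
    exact hr ((Matrix.isUnit_iff_isUnit_det _).mpr (isUnit_iff_ne_zero.mpr hd))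
  obtain ⟨v, hv0, hv⟩ := Matrix.exists_mulVec_eq_zero_iff.mpr hdet
  have hWv : W *ᵥ v = r • v := by
    have h1 : (algebraMap ℝ (Matrix (Fin n) (Fin n) ℝ) r - W) *ᵥ v
        = r • v - W *ᵥ v := by
      rw [Matrix.sub_mulVec, Algebra.algebraMap_eq_smul_one, Matrix.smul_mulVec,
        Matrix.one_mulVec]
    rw [h1] at hv
    linear_combination (norm := module) -hv
  have h2 := hW.dotProduct_mulVec_pos hv0
  rw [hWv] at h2
  have h3 : star v ⬝ᵥ r • v = r * (v ⬝ᵥ v) := by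
    simp [dotProduct_smul, star_trivial]
  rw [h3] at h2
  have h4 : 0 < v ⬝ᵥ v := by
    have hnn : 0 ≤ v ⬝ᵥ v := Finset.sum_nonneg fun i _ => mul_self_nonneg (v i)
    rcases lt_or_eq_of_le hnn with h | h
    · exact h
    · exact absurd (dotProduct_self_eq_zero.mp h.symm) hv0
  nlinarith [h2, h4]

lemma mem_spectrum_of_map {n : ℕ} {M : Matrix (Fin n) (Fin n) ℝ} {r : ℝ}
    (h : r ∈ spectrum ℝ (M.map Complex.ofReal)) : r ∈ spectrum ℝ M := by
  have hsub := AlgHom.spectrum_apply_subset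
    (Complex.ofRealAm.mapMatrix : Matrix (Fin n) (Fin n) ℝ →ₐ[ℝ] Matrix (Fin n) (Fin n) ℂ) M
  apply hsub
  have : (Complex.ofRealAm.mapMatrix : Matrix (Fin n) (Fin n) ℝ →ₐ[ℝ] _) M
      = M.map Complex.ofReal := rfl
  rwa [this]

end Helpers

/-- Spectral radius of a complex matrix: supremum of moduli of its eigenvalues. -/
noncomputable def specRad {n : ℕ} (M : Matrix (Fin n) (Fin n) ℂ) : ℝ :=
  sSup {r : ℝ | ∃ μ ∈ spectrum ℂ M, r = ‖μ‖}

set_option maxHeartbeats 2000000 in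
theorem stmt_5 {n : ℕ} (W T : Matrix (Fin n) (Fin n) ℝ)
    (hW : W.PosDef) (hT : T.IsSymm) (hTinv : IsUnit T)
    (α : ℝ) (hα : 0 < α)
    (lamMax muMin : ℝ)
    (hlam_mem : lamMax ∈ spectrum ℝ W)
    (hlam_max : ∀ x ∈ spectrum ℝ W, x ≤ lamMax)
    (hmu_mem : ∃ x ∈ spectrum ℝ T, |x| = muMin)
    (hmu_min : ∀ x ∈ spectrum ℝ T, muMin ≤ |x|) :
    specRad (Complex.I •
        ((T.map Complex.ofReal)⁻¹ * (W.map Complex.ofReal) *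
          ((α : ℂ) • (1 : Matrix (Fin n) (Fin n) ℂ) + W.map Complex.ofReal)⁻¹ *
          ((α : ℂ) • (1 : Matrix (Fin n) (Fin n) ℂ) -
            Complex.I • T.map Complex.ofReal)))
      ≤ (lamMax / (α + lamMax)) * (Real.sqrt (α ^ 2 + muMin ^ 2) / muMin) := by
  classical
  have hspecW : ∀ r ∈ spectrum ℝ W, 0 < r := spectrum_pos_of_posDef hW
  have hlam_pos : 0 < lamMax := hspecW _ hlam_mem
  have hmu_pos : 0 < muMin := by
    obtain ⟨x, hx, hxabs⟩ := hmu_mem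
    have hx0 : x ≠ 0 := by
      rintro rfl
      exact (spectrum.zero_mem_iff ℝ).mp hx hTinv
    rw [← hxabs]
    exact abs_pos.mpr hx0
  set W' : Matrix (Fin n) (Fin n) ℂ := W.map Complex.ofReal with hW'def
  set T' : Matrix (Fin n) (Fin n) ℂ := T.map Complex.ofReal with hT'def
  set S : Matrix (Fin n) (Fin n) ℂ := (α : ℂ) • 1 + W' with hSdef
  set A : Matrix (Fin n) (Fin n) ℂ := (α : ℂ) • 1 - Complex.I • T' with hAdef
  set c1 : ℝ := lamMax / (α + lamMax) with hc1def
  set c2 : ℝ := Real.sqrt (α ^ 2 + muMin ^ 2) / muMin with hc2def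
  have hc1_nonneg : 0 ≤ c1 := by positivity
  have hc2_nonneg : 0 ≤ c2 := by positivity
  -- Hermitianness
  have hW'h : W'.IsHermitian := by
    ext i j
    have hsym : W j i = W i j := by
      conv_lhs => rw [← hW.1]
      simp [Matrix.conjTranspose_apply]
    simp [hW'def, Matrix.conjTranspose_apply, Matrix.map_apply, Complex.conj_ofReal, hsym]
  have hT'h : T'.IsHermitian := by
    ext i j
    have hsym : T j i = T i j := by
      conv_lhs => rw [← hT]
      simp [Matrix.transpose_apply]
    simp [hT'def, Matrix.conjTranspose_apply, Matrix.map_apply, Complex.conj_ofReal, hsym]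
  -- invertibility of T' and S
  have hT'u : IsUnit T' := by
    rw [Matrix.isUnit_iff_isUnit_det] at hTinv ⊢
    have hdet : T'.det = ((T.det : ℝ) : ℂ) := by
      rw [hT'def]
      exact (RingHom.map_det Complex.ofRealHom T).symm
    rw [hdet]
    simpa [isUnit_iff_ne_zero, Complex.ofReal_eq_zero] using hTinv
  have hsmul1 : (α : ℂ) • (1 : Matrix (Fin n) (Fin n) ℂ) = α • 1 := by
    ext i j
    simp [Matrix.smul_apply, Complex.real_smul]
  have hSu : IsUnit S := by
    by_contra hne
    have hmem : (-α) ∈ spectrum ℝ W' := by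
      rw [spectrum.mem_iff]
      intro hu
      apply hne
      have heq : algebraMap ℝ (Matrix (Fin n) (Fin n) ℂ) (-α) - W' = -S := by
        rw [Algebra.algebraMap_eq_smul_one, hSdef, hsmul1]
        module
      rw [heq] at hu
      exact (IsUnit.neg_iff _).mp hu
    have := hspecW _ (mem_spectrum_of_map hmem)
    linarith
  -- eigenbasis facts for W'
  set bW := hW'h.eigenvectorBasis with hbWdef
  set lam := hW'h.eigenvalues with hlamdef
  have hlam_facts : ∀ i, 0 < lam i ∧ lam i ≤ lamMax := by
    intro i
    have hmem := mem_spectrum_of_map (hW'h.eigenvalues_mem_spectrum_real i)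
    exact ⟨hspecW _ hmem, hlam_max _ hmem⟩
  set cW : Fin n → ℂ := fun i => ((lam i : ℝ) : ℂ) * (((α + lam i : ℝ)) : ℂ)⁻¹ with hcWdef
  have hcast : ∀ i, (((α + lam i : ℝ)) : ℂ) = (α : ℂ) + ((lam i : ℝ) : ℂ) := by
    intro i; push_cast; ring
  have hSb : ∀ i, S *ᵥ ⇑(bW i) = (((α + lam i : ℝ)) : ℂ) • ⇑(bW i) := by
    intro i
    rw [hSdef, Matrix.add_mulVec, Matrix.smul_mulVec, Matrix.one_mulVec,
      hW'h.mulVec_eigenvectorBasis, RCLike.real_smul_eq_coe_smul (K := ℂ),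
      hcast i, add_smul]
    rfl
  have hkne : ∀ i, (((α + lam i : ℝ)) : ℂ) ≠ 0 := by
    intro i
    have := (hlam_facts i).1
    simp only [ne_eq, Complex.ofReal_eq_zero]
    intro h; linarith
  have hSdet : IsUnit S.det := (Matrix.isUnit_iff_isUnit_det S).mp hSu
  have hSinvb : ∀ i, S⁻¹ *ᵥ ⇑(bW i) = ((((α + lam i : ℝ)) : ℂ))⁻¹ • ⇑(bW i) := by
    intro i
    have h1 : S⁻¹ *ᵥ (S *ᵥ ⇑(bW i)) = ⇑(bW i) := by
      rw [Matrix.mulVec_mulVec, Matrix.nonsing_inv_mul _ hSdet, Matrix.one_mulVec]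
    rw [hSb i, Matrix.mulVec_smul] at h1
    calc S⁻¹ *ᵥ ⇑(bW i)
        = ((((α + lam i : ℝ)) : ℂ))⁻¹ • ((((α + lam i : ℝ)) : ℂ) • (S⁻¹ *ᵥ ⇑(bW i))) :=
          (inv_smul_smul₀ (hkne i) _).symm
      _ = ((((α + lam i : ℝ)) : ℂ))⁻¹ • ⇑(bW i) := by rw [h1]
  have hPb : ∀ i, (W' * S⁻¹) *ᵥ ⇑(bW i) = cW i • ⇑(bW i) := by
    intro i
    rw [← Matrix.mulVec_mulVec, hSinvb i, Matrix.mulVec_smul,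
      hW'h.mulVec_eigenvectorBasis, RCLike.real_smul_eq_coe_smul (K := ℂ), smul_smul,
      hcWdef]
    congr 1
    exact mul_comm _ _
  have hPbound : ∀ i, ‖cW i‖ ≤ c1 * ‖(1 : ℂ)‖ := by
    intro i
    obtain ⟨hpos, hle⟩ := hlam_facts i
    rw [norm_one, mul_one, hcWdef]
    simp only
    rw [norm_mul, norm_inv, Complex.norm_real, Complex.norm_real, Real.norm_eq_abs,
      Real.norm_eq_abs, abs_of_pos hpos, abs_of_pos (by linarith : (0:ℝ) < α + lam i)]
    rw [hc1def, ← div_eq_mul_inv, div_le_div_iff₀ (by linarith) (by linarith)]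
    nlinarith
  -- eigenbasis facts for T'
  set bT := hT'h.eigenvectorBasis with hbTdef
  set mu := hT'h.eigenvalues with hmudef
  have hmu_facts : ∀ i, muMin ≤ |mu i| := fun i =>
    hmu_min _ (mem_spectrum_of_map (hT'h.eigenvalues_mem_spectrum_real i))
  set cT : Fin n → ℂ := fun i => (α : ℂ) - Complex.I * ((mu i : ℝ) : ℂ) with hcTdef
  have hAb : ∀ i, A *ᵥ ⇑(bT i) = cT i • ⇑(bT i) := by
    intro i
    rw [hAdef, Matrix.sub_mulVec, Matrix.smul_mulVec, Matrix.one_mulVec,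
      Matrix.smul_mulVec, hT'h.mulVec_eigenvectorBasis,
      RCLike.real_smul_eq_coe_smul (K := ℂ), smul_smul, hcTdef, sub_smul]
    rfl
  have hTb : ∀ i, T' *ᵥ ⇑(bT i) = ((mu i : ℝ) : ℂ) • ⇑(bT i) := by
    intro i
    rw [hT'h.mulVec_eigenvectorBasis, RCLike.real_smul_eq_coe_smul (K := ℂ)]
    rfl
  have hAbound : ∀ i, ‖cT i‖ ≤ c2 * ‖((mu i : ℝ) : ℂ)‖ := by
    intro i
    have habs : ‖cT i‖ = Real.sqrt (α ^ 2 + (mu i) ^ 2) := by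
      have hz : (α : ℂ) - Complex.I * ((mu i : ℝ) : ℂ) = ⟨α, -(mu i)⟩ := by
        apply Complex.ext <;> simp
      rw [hcTdef]
      simp only
      rw [hz, Complex.norm_def, Complex.normSq_mk]
      congr 1
      ring
    rw [habs, Complex.norm_real, Real.norm_eq_abs, hc2def, div_mul_eq_mul_div,
      le_div_iff₀ hmu_pos]
    have h1 : Real.sqrt (α ^ 2 + mu i ^ 2) * muMin
        = Real.sqrt ((α ^ 2 + mu i ^ 2) * muMin ^ 2) := by
      rw [Real.sqrt_mul (by positivity), Real.sqrt_sq hmu_pos.le]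
    have h2 : Real.sqrt (α ^ 2 + muMin ^ 2) * |mu i|
        = Real.sqrt ((α ^ 2 + muMin ^ 2) * (mu i) ^ 2) := by
      rw [Real.sqrt_mul (by positivity), Real.sqrt_sq_eq_abs]
    rw [h1, h2]
    apply Real.sqrt_le_sqrt
    nlinarith [mul_self_le_mul_self hmu_pos.le (hmu_facts i), sq_abs (mu i), sq_nonneg α]
  -- the iteration matrix and its eigenvector
  set G : Matrix (Fin n) (Fin n) ℂ := Complex.I • (T'⁻¹ * W' * S⁻¹ * A) with hGdef
  show sSup {r : ℝ | ∃ μ ∈ spectrum ℂ G, r = ‖μ‖} ≤ c1 * c2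
  refine Real.sSup_le ?_ (by positivity)
  rintro r ⟨μ, hμ, rfl⟩
  rw [spectrum.mem_iff] at hμ
  have hdet : (algebraMap ℂ (Matrix (Fin n) (Fin n) ℂ) μ - G).det = 0 := by
    by_contra hd
    exact hμ ((Matrix.isUnit_iff_isUnit_det _).mpr (isUnit_iff_ne_zero.mpr hd))
  obtain ⟨v, hv0, hv⟩ := Matrix.exists_mulVec_eq_zero_iff.mpr hdet
  have hGv : G *ᵥ v = μ • v := by
    have h1 : (algebraMap ℂ (Matrix (Fin n) (Fin n) ℂ) μ - G) *ᵥ v = μ • v - G *ᵥ v := by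
      rw [Matrix.sub_mulVec, Algebra.algebraMap_eq_smul_one, Matrix.smul_mulVec,
        Matrix.one_mulVec]
    rw [h1] at hv
    linear_combination (norm := module) -hv
  have hT'det : IsUnit T'.det := (Matrix.isUnit_iff_isUnit_det T').mp hT'u
  have hkey : Complex.I • ((W' * S⁻¹) *ᵥ (A *ᵥ v)) = μ • (T' *ᵥ v) := by
    have h1 : T' *ᵥ (G *ᵥ v) = μ • (T' *ᵥ v) := by rw [hGv, Matrix.mulVec_smul]
    have h2 : T' *ᵥ (G *ᵥ v) = Complex.I • ((W' * S⁻¹) *ᵥ (A *ᵥ v)) := by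
      rw [hGdef, Matrix.smul_mulVec, Matrix.mulVec_smul, Matrix.mulVec_mulVec,
        Matrix.mulVec_mulVec]
      congr 2
      rw [← Matrix.mul_assoc, ← Matrix.mul_assoc, ← Matrix.mul_assoc,
        Matrix.mul_nonsing_inv _ hT'det, Matrix.one_mul]
    rw [← h2, h1]
  have hvne : T' *ᵥ v ≠ 0 := by
    intro h0
    apply hv0
    have hz : T'⁻¹ *ᵥ (T' *ᵥ v) = v := by
      rw [Matrix.mulVec_mulVec, Matrix.nonsing_inv_mul _ hT'det, Matrix.one_mulVec]
    rw [h0, Matrix.mulVec_zero] at hz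
    exact hz.symm
  have hy_pos : 0 < ‖(WithLp.equiv 2 (Fin n → ℂ)).symm (T' *ᵥ v)‖ := by
    rw [norm_pos_iff]
    intro h
    apply hvne
    have := congrArg (WithLp.equiv 2 (Fin n → ℂ)) h
    simpa using this
  have step1 : ‖μ‖ * ‖(WithLp.equiv 2 (Fin n → ℂ)).symm (T' *ᵥ v)‖
      = ‖toEuclideanLin (W' * S⁻¹) ((WithLp.equiv 2 (Fin n → ℂ)).symm (A *ᵥ v))‖ := by
    have hc := congrArg (fun w => ‖(WithLp.equiv 2 (Fin n → ℂ)).symm w‖) hkey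
    simp only [WithLp.equiv_symm_apply, WithLp.toLp_smul, norm_smul, Complex.norm_I, one_mul] at hc
    rw [WithLp.equiv_symm_apply, Matrix.toEuclideanLin_apply_piLp_toLp]
    exact hc.symm
  have step2 : ‖toEuclideanLin (W' * S⁻¹) ((WithLp.equiv 2 (Fin n → ℂ)).symm (A *ᵥ v))‖
      ≤ c1 * ‖toEuclideanLin (1 : Matrix (Fin n) (Fin n) ℂ)
          ((WithLp.equiv 2 (Fin n → ℂ)).symm (A *ᵥ v))‖ :=
    matrix_diag_norm_le bW _ _ cW (fun _ => 1) hPb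
      (fun i => by rw [Matrix.one_mulVec, one_smul]) c1 hc1_nonneg hPbound _
  have h1e : toEuclideanLin (1 : Matrix (Fin n) (Fin n) ℂ)
      ((WithLp.equiv 2 (Fin n → ℂ)).symm (A *ᵥ v))
      = (WithLp.equiv 2 (Fin n → ℂ)).symm (A *ᵥ v) := by
    rw [WithLp.equiv_symm_apply, Matrix.toEuclideanLin_apply_piLp_toLp, Matrix.one_mulVec]
  have step3 : ‖(WithLp.equiv 2 (Fin n → ℂ)).symm (A *ᵥ v)‖
      ≤ c2 * ‖(WithLp.equiv 2 (Fin n → ℂ)).symm (T' *ᵥ v)‖ := by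
    have h := matrix_diag_norm_le bT A T' cT (fun i => ((mu i : ℝ) : ℂ)) hAb hTb c2
      hc2_nonneg hAbound ((WithLp.equiv 2 (Fin n → ℂ)).symm v)
    rw [WithLp.equiv_symm_apply] at h ⊢
    rwa [Matrix.toEuclideanLin_apply_piLp_toLp,
      Matrix.toEuclideanLin_apply_piLp_toLp] at h
  have final : ‖μ‖ * ‖(WithLp.equiv 2 (Fin n → ℂ)).symm (T' *ᵥ v)‖
      ≤ (c1 * c2) * ‖(WithLp.equiv 2 (Fin n → ℂ)).symm (T' *ᵥ v)‖ := by
    rw [step1]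
    calc ‖toEuclideanLin (W' * S⁻¹) ((WithLp.equiv 2 (Fin n → ℂ)).symm (A *ᵥ v))‖
        ≤ c1 * ‖toEuclideanLin (1 : Matrix (Fin n) (Fin n) ℂ)
            ((WithLp.equiv 2 (Fin n → ℂ)).symm (A *ᵥ v))‖ := step2
      _ = c1 * ‖(WithLp.equiv 2 (Fin n → ℂ)).symm (A *ᵥ v)‖ := by rw [h1e]
      _ ≤ c1 * (c2 * ‖(WithLp.equiv 2 (Fin n → ℂ)).symm (T' *ᵥ v)‖) :=
          mul_le_mul_of_nonneg_left step3 hc1_nonneg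
      _ = (c1 * c2) * ‖(WithLp.equiv 2 (Fin n → ℂ)).symm (T' *ᵥ v)‖ := by ring
  exact le_of_mul_le_mul_right final hy_pos
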